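/- A formula φ ∈ L is satisfiable for the class of finite notional doxastic models if and only if φ is satisfiable for the class of finite quasi-notional doxastic models. -/

import Mathlib

namespace LDAPaper

/-- Formulas over atomic propositions `ℕ` and agents `Agt`.
`expbel i α` is the explicit belief operator `△ᵢ α`; `impbel i φ` is the implicit
belief operator `□ᵢ φ`. -/
inductive Frm (Agt : Type) : Type
  | atom : ℕ → Frm Agt
  | neg : Frm Agt → Frm Agt
  | and : Frm Agt → Frm Agt → Frm Agt
  | expbel : Agt → Frm Agt → Frm Agt
  | impbel : Agt → Frm Agt → Frm Agt

namespace Frm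

variable {Agt : Type}

/-- Membership in the sublanguage `L0` (no implicit-belief operator). -/
def isL0 : Frm Agt → Prop
  | atom _ => True
  | neg α => isL0 α
  | and α β => isL0 α ∧ isL0 β
  | expbel _ α => isL0 α
  | impbel _ _ => False

/-- Membership in the language `L`: the explicit belief operator applies only to
`L0`-formulas. -/
def isL : Frm Agt → Prop
  | atom _ => True
  | neg φ => isL φ
  | and φ ψ => isL φ ∧ isL ψ
  | expbel _ α => isL0 α
  | impbel _ φ => isL φ

/-- Material implication, defined from `¬` and `∧` as usual. -/
def imp (φ ψ : Frm Agt) : Frm Agt := neg (and φ (neg ψ))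

/-- Disjunction, defined from `¬` and `∧` as usual. -/
def or (φ ψ : Frm Agt) : Frm Agt := neg (and (neg φ) (neg ψ))

/-- Biconditional, defined from `¬` and `∧` as usual. -/
def iff (φ ψ : Frm Agt) : Frm Agt := and (imp φ ψ) (imp ψ φ)

/-- The set of atomic propositions occurring in a formula. -/
def atomsOf : Frm Agt → Set ℕ
  | atom p => {p}
  | neg φ => atomsOf φ
  | and φ ψ => atomsOf φ ∪ atomsOf ψ
  | expbel _ φ => atomsOf φ
  | impbel _ φ => atomsOf φ

end Frm

/-- A model `(W, D, N, V)`: worlds, doxastic function, notional function, valuation. -/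
structure PreNDM (Agt : Type) where
  W : Type
  D : Agt → W → Set (Frm Agt)
  N : Agt → W → Set W
  V : ℕ → Set W

namespace PreNDM

variable {Agt : Type}

/-- Truth of a formula at a world of a model. -/
def sat (M : PreNDM Agt) : M.W → Frm Agt → Prop
  | w, .atom p => w ∈ M.V p
  | w, .neg φ => ¬ sat M w φ
  | w, .and φ ψ => sat M w φ ∧ sat M w ψ
  | w, .expbel i α => α ∈ M.D i w
  | w, .impbel i φ => ∀ v ∈ M.N i w, sat M v φ

end PreNDM

/-- Quasi-notional doxastic model: belief bases consist of `L0`-formulas,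
(C1*) `N(i,w) ⊆ ∩_{α ∈ D(i,w)} ‖α‖`, and (C2) `N(i,w) ≠ ∅`. -/
def isQNDM {Agt : Type} (M : PreNDM Agt) : Prop :=
  (∀ i w, ∀ α ∈ M.D i w, α.isL0) ∧
  (∀ i w, ∀ v ∈ M.N i w, ∀ α ∈ M.D i w, M.sat v α) ∧
  (∀ i w, (M.N i w).Nonempty)

/-- Notional doxastic model: belief bases consist of `L0`-formulas,
(C1) `N(i,w) = ∩_{α ∈ D(i,w)} ‖α‖`, and (C2) `N(i,w) ≠ ∅`. -/
def isNDM {Agt : Type} (M : PreNDM Agt) : Prop :=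
  (∀ i w, ∀ α ∈ M.D i w, α.isL0) ∧
  (∀ i w, M.N i w = {v | ∀ α ∈ M.D i w, M.sat v α}) ∧
  (∀ i w, (M.N i w).Nonempty)

/-- A model is finite iff `W` is finite and every `D(i,w)` and every
`{p ∈ Atm : w ∈ V(p)}` is finite. -/
def finiteModel {Agt : Type} (M : PreNDM Agt) : Prop :=
  Finite M.W ∧ (∀ i w, (M.D i w).Finite) ∧ (∀ w, {p : ℕ | w ∈ M.V p}.Finite)

end LDAPaper
namespace LDAPaper

/-- A multi-agent belief base `B = (B_1,…,B_n, V)`. -/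
structure MABase (Agt : Type) where
  B : Agt → Set (Frm Agt)
  V : Set ℕ

namespace MABase

variable {Agt : Type}

/-- Satisfaction of `L0`-formulas by a multi-agent belief base. -/
def bsat (b : MABase Agt) : Frm Agt → Prop
  | .atom p => p ∈ b.V
  | .neg α => ¬ bsat b α
  | .and α β => bsat b α ∧ bsat b β
  | .expbel i α => α ∈ b.B i
  | .impbel _ _ => True

/-- Well-formedness: each agent's belief base consists of `L0`-formulas. -/
def wf (b : MABase Agt) : Prop := ∀ i, ∀ α ∈ b.B i, α.isL0

/-- Doxastic alternative relation: `b R_i b'` iff `b'` satisfies every formula in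
agent `i`'s belief base in `b`. -/
def R (i : Agt) (b b' : MABase Agt) : Prop := ∀ α ∈ b.B i, bsat b' α

end MABase

/-- Satisfaction of `L`-formulas by a multi-agent belief model `(b, Cxt)`. -/
def msat {Agt : Type} (Cxt : Set (MABase Agt)) : MABase Agt → Frm Agt → Prop
  | b, .atom p => p ∈ b.V
  | b, .neg φ => ¬ msat Cxt b φ
  | b, .and φ ψ => msat Cxt b φ ∧ msat Cxt b ψ
  | b, .expbel i α => α ∈ b.B i
  | b, .impbel i φ => ∀ b' ∈ Cxt, MABase.R i b b' → msat Cxt b' φ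

/-- Consistent multi-agent belief model: all bases involved are well formed and
for every agent `i` and every `b' ∈ Cxt ∪ {b}` there is `b'' ∈ Cxt` with `b' R_i b''`. -/
def isCMAB {Agt : Type} (b : MABase Agt) (Cxt : Set (MABase Agt)) : Prop :=
  (∀ b' ∈ insert b Cxt, b'.wf) ∧
  (∀ i : Agt, ∀ b' ∈ insert b Cxt, ∃ b'' ∈ Cxt, MABase.R i b' b'')

/-- Boolean evaluation of a formula, treating atoms, explicit-belief formulas and
implicit-belief formulas as propositional atoms. -/
def boolEval {Agt : Type} (v : Frm Agt → Bool) : Frm Agt → Bool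
  | .neg φ => ! boolEval v φ
  | .and φ ψ => boolEval v φ && boolEval v ψ
  | φ => v φ

/-- Instances of classical propositional tautologies. -/
def Tautology {Agt : Type} (φ : Frm Agt) : Prop :=
  ∀ v : Frm Agt → Bool, boolEval v φ = true

/-- Derivability in the logic LDA: classical propositional logic over `L` plus
axioms K, D, Int and the necessitation rule for implicit belief. -/
inductive LDA {Agt : Type} : Frm Agt → Prop
  | taut {φ : Frm Agt} : φ.isL → Tautology φ → LDA φ
  | axK (i : Agt) {φ ψ : Frm Agt} : φ.isL → ψ.isL →
      LDA (((Frm.impbel i φ).and (Frm.impbel i (φ.imp ψ))).imp (Frm.impbel i ψ))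
  | axD (i : Agt) {φ : Frm Agt} : φ.isL →
      LDA (Frm.neg ((Frm.impbel i φ).and (Frm.impbel i (Frm.neg φ))))
  | axInt (i : Agt) {α : Frm Agt} : α.isL0 →
      LDA ((Frm.expbel i α).imp (Frm.impbel i α))
  | mp {φ ψ : Frm Agt} : LDA (φ.imp ψ) → LDA φ → LDA ψ
  | nec (i : Agt) {φ : Frm Agt} : LDA φ → LDA (Frm.impbel i φ)

/-- Conjunction of a list of formulas (the empty conjunction is a tautology). -/
def conjList {Agt : Type} : List (Frm Agt) → Frm Agt
  | [] => Frm.neg ((Frm.atom 0).and (Frm.neg (Frm.atom 0)))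
  | φ :: l => φ.and (conjList l)

/-- A set of formulas is LDA-consistent iff no contradiction is derivable in LDA
from finitely many of its members. -/
def Consistent {Agt : Type} (Δ : Set (Frm Agt)) : Prop :=
  ∀ l : List (Frm Agt), (∀ ψ ∈ l, ψ ∈ Δ) → ¬ LDA (Frm.neg (conjList l))

/-- Maximally LDA-consistent set of `L`-formulas. -/
def MCS {Agt : Type} (Γ : Set (Frm Agt)) : Prop :=
  (∀ φ ∈ Γ, φ.isL) ∧ Consistent Γ ∧
    ∀ Δ : Set (Frm Agt), (∀ φ ∈ Δ, φ.isL) → Consistent Δ → Γ ⊆ Δ → Δ = Γ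

/-- Canonical doxastic function: `α ∈ D^c(i,w)` iff `△ᵢα ∈ w`. -/
def canonD {Agt : Type} (i : Agt) (w : {Γ : Set (Frm Agt) // MCS Γ}) : Set (Frm Agt) :=
  {α | Frm.expbel i α ∈ w.val}

/-- Canonical notional function: `v ∈ N^c(i,w)` iff `□ᵢφ ∈ w` implies `φ ∈ v`. -/
def canonN {Agt : Type} (i : Agt) (w : {Γ : Set (Frm Agt) // MCS Γ}) :
    Set {Γ : Set (Frm Agt) // MCS Γ} :=
  {v | ∀ φ : Frm Agt, Frm.impbel i φ ∈ w.val → φ ∈ v.val}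

/-- Canonical valuation: `w ∈ V^c(p)` iff `p ∈ w`. -/
def canonV {Agt : Type} (p : ℕ) : Set {Γ : Set (Frm Agt) // MCS Γ} :=
  {w | Frm.atom p ∈ w.val}

/-- The canonical model of LDA: worlds are the maximally LDA-consistent sets. -/
def canonM (Agt : Type) : PreNDM Agt where
  W := {Γ : Set (Frm Agt) // MCS Γ}
  D := canonD
  N := canonN
  V := canonV

/-- `w ≡_Σ v` iff `w` and `v` satisfy the same formulas of `Σ`. -/
def filtRel {Agt : Type} (M : PreNDM Agt) (S : Set (Frm Agt)) (w v : M.W) : Prop :=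
  ∀ φ ∈ S, (M.sat w φ ↔ M.sat v φ)

/-- The setoid of `≡_Σ`-equivalent worlds. -/
def filtSetoid {Agt : Type} (M : PreNDM Agt) (S : Set (Frm Agt)) : Setoid M.W where
  r := filtRel M S
  iseqv := ⟨fun _ _ _ => Iff.rfl, fun h φ hφ => (h φ hφ).symm,
    fun h1 h2 φ hφ => (h1 φ hφ).trans (h2 φ hφ)⟩

/-- The `≡_Σ`-equivalence class `|w|_Σ` of a world `w`. -/
def filtMk {Agt : Type} (M : PreNDM Agt) (S : Set (Frm Agt)) (w : M.W) :
    Quotient (filtSetoid M S) :=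
  Quotient.mk (filtSetoid M S) w

/-- Closure under subformulas. -/
def SubClosed {Agt : Type} (S : Set (Frm Agt)) : Prop :=
  (∀ φ : Frm Agt, Frm.neg φ ∈ S → φ ∈ S) ∧
  (∀ φ ψ : Frm Agt, Frm.and φ ψ ∈ S → φ ∈ S ∧ ψ ∈ S) ∧
  (∀ (i : Agt) (φ : Frm Agt), Frm.expbel i φ ∈ S → φ ∈ S) ∧
  (∀ (i : Agt) (φ : Frm Agt), Frm.impbel i φ ∈ S → φ ∈ S)

/-- The filtration `M_Σ = (W_Σ, D_Σ, N_Σ, V_Σ)` of `M` through `Σ`: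
`W_Σ` is the quotient of `W` by `≡_Σ`;
`D_Σ(i,|w|) = (∩_{v ∈ |w|} D(i,v)) ∩ Σ`;
`N_Σ(i,|w|) = {|v| : v ∈ N(i,w)}` (smallest filtration);
`V_Σ(p) = {|w| : (M,w) ⊨ p}` if `p` occurs in `Σ`, and `∅` otherwise. -/
def filtModel {Agt : Type} (M : PreNDM Agt) (S : Set (Frm Agt)) : PreNDM Agt where
  W := Quotient (filtSetoid M S)
  D := fun i x => {α | α ∈ S ∧ ∀ v : M.W, filtMk M S v = x → α ∈ M.D i v}
  N := fun i x => {y | ∃ w v : M.W, filtMk M S w = x ∧ filtMk M S v = y ∧ v ∈ M.N i w}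
  V := fun p =>
    {x | (∃ φ ∈ S, p ∈ φ.atomsOf) ∧ ∃ w : M.W, filtMk M S w = x ∧ M.sat w (Frm.atom p)}

/-- The language of Fagin & Halpern's logic of general awareness:
`bel` is implicit belief `B_i`, `aware` is awareness `A_i`, `expk` is explicit
belief `X_i`. -/
inductive LGA (Agt : Type) : Type
  | atom : ℕ → LGA Agt
  | neg : LGA Agt → LGA Agt
  | and : LGA Agt → LGA Agt → LGA Agt
  | bel : Agt → LGA Agt → LGA Agt
  | aware : Agt → LGA Agt → LGA Agt
  | expk : Agt → LGA Agt → LGA Agt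

/-- An awareness structure `(S, R_1,…,R_n, A_1,…,A_n, π)`. -/
structure AwStruct (Agt : Type) where
  S : Type
  R : Agt → S → S → Prop
  A : Agt → S → Set (LGA Agt)
  val : ℕ → Set S

namespace AwStruct

variable {Agt : Type}

/-- Truth in an awareness structure; `X_i φ` holds iff both `B_i φ` and `A_i φ` hold. -/
def sat (M : AwStruct Agt) : M.S → LGA Agt → Prop
  | s, .atom p => s ∈ M.val p
  | s, .neg φ => ¬ sat M s φ
  | s, .and φ ψ => sat M s φ ∧ sat M s ψ
  | s, .bel i φ => ∀ t, M.R i s t → sat M t φ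
  | s, .aware i φ => φ ∈ M.A i s
  | s, .expk i φ => (∀ t, M.R i s t → sat M t φ) ∧ φ ∈ M.A i s

/-- An awareness structure is serial iff every `R_i` is serial. -/
def serial (M : AwStruct Agt) : Prop := ∀ i s, ∃ t, M.R i s t

end AwStruct

/-- The translation `tr` from `L` to the language of general awareness. -/
def tr {Agt : Type} : Frm Agt → LGA Agt
  | .atom p => .atom p
  | .neg φ => .neg (tr φ)
  | .and φ ψ => .and (tr φ) (tr ψ)
  | .expbel i α => .expk i (tr α)
  | .impbel i φ => .bel i (tr φ)

end LDAPaper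

namespace LDAPaper

lemma atomsOf_finite {Agt : Type} (ψ : Frm Agt) : ψ.atomsOf.Finite := by
  induction ψ with
  | atom p => exact Set.finite_singleton p
  | neg φ ih => exact ih
  | and φ ψ ih1 ih2 => exact ih1.union ih2
  | expbel i φ ih => exact ih
  | impbel i φ ih => exact ih

def listOr {Agt : Type} : List (Frm Agt) → Frm Agt
  | [] => Frm.and (Frm.atom 0) (Frm.neg (Frm.atom 0))
  | a :: l => Frm.or a (listOr l)

lemma sat_listOr {Agt : Type} (M : PreNDM Agt) (v : M.W) (l : List (Frm Agt)) :
    M.sat v (listOr l) ↔ ∃ a ∈ l, M.sat v a := by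
  induction l with
  | nil => simp [listOr, PreNDM.sat]
  | cons a l ih =>
      simp only [listOr, Frm.or, PreNDM.sat]
      constructor
      · intro h
        rcases Classical.em (M.sat v a) with ha | ha
        · exact ⟨a, List.mem_cons_self, ha⟩
        · have hl : M.sat v (listOr l) := by
            by_contra hl
            exact h ⟨ha, hl⟩
          obtain ⟨b, hb, hsb⟩ := ih.mp hl
          exact ⟨b, List.mem_cons_of_mem a hb, hsb⟩
      · rintro ⟨b, hb, hsb⟩ hcon
        rcases List.mem_cons.mp hb with rfl | hb'
        · exact hcon.1 hsb
        · exact hcon.2 (ih.mpr ⟨b, hb', hsb⟩)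

lemma isL0_listOr {Agt : Type} (l : List (Frm Agt)) (h : ∀ a ∈ l, a.isL0) :
    (listOr l).isL0 := by
  induction l with
  | nil => simp [listOr, Frm.isL0]
  | cons a l ih =>
      simp only [listOr, Frm.or, Frm.isL0]
      exact ⟨h a (by simp), ih fun b hb => h b (by simp [hb])⟩

lemma atomsOf_subset_listOr {Agt : Type} {a : Frm Agt} {l : List (Frm Agt)}
    (h : a ∈ l) : a.atomsOf ⊆ (listOr l).atomsOf := by
  induction l with
  | nil => simp at h
  | cons b l ih =>
      have : (listOr (b :: l)).atomsOf = b.atomsOf ∪ (listOr l).atomsOf := by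
        simp [listOr, Frm.or, Frm.atomsOf]
      rw [this]
      rcases List.mem_cons.mp h with rfl | hb
      · exact Set.subset_union_left
      · exact (ih hb).trans Set.subset_union_right

open Classical in
/-- Modify a model by adding one formula to each belief base and changing the
valuation outside a set `used` of atoms. -/
def tweak {Agt : Type} (M : PreNDM Agt) (used : Set ℕ) (δ : Agt → M.W → Frm Agt)
    (Vnew : ℕ → Set M.W) : PreNDM Agt where
  W := M.W
  D := fun i w => insert (δ i w) (M.D i w)
  N := M.N
  V := fun p => if p ∈ used then M.V p else Vnew p

lemma sat_tweak {Agt : Type} (M : PreNDM Agt) (used : Set ℕ)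
    (δ : Agt → M.W → Frm Agt) (Vnew : ℕ → Set M.W)
    (hδ : ∀ i w, ∃ p ∈ (δ i w).atomsOf, p ∉ used) :
    ∀ ψ : Frm Agt, ψ.atomsOf ⊆ used →
      ∀ w : M.W, (tweak M used δ Vnew).sat w ψ ↔ M.sat w ψ := by
  intro ψ
  induction ψ with
  | atom p =>
      intro hsub w
      have hp : p ∈ used := hsub (by simp [Frm.atomsOf])
      simp [tweak, PreNDM.sat, hp]
      exact Iff.rfl
  | neg φ ih =>
      intro hsub w
      simp only [PreNDM.sat]
      rw [ih hsub w]
  | and φ ψ ih1 ih2 =>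
      intro hsub w
      have h1 : φ.atomsOf ⊆ used := (Set.subset_union_left).trans hsub
      have h2 : ψ.atomsOf ⊆ used := (Set.subset_union_right).trans hsub
      simp only [PreNDM.sat]
      rw [ih1 h1 w, ih2 h2 w]
  | expbel i α ih =>
      intro hsub w
      simp only [PreNDM.sat, tweak, Set.mem_insert_iff]
      constructor
      · rintro (rfl | h)
        · obtain ⟨p, hp, hpu⟩ := hδ i w
          exact absurd (hsub hp) hpu
        · exact h
      · exact Or.inr
  | impbel i φ ih =>
      intro hsub w
      simp only [PreNDM.sat]
      exact forall₂_congr fun v hv => ih hsub v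

end LDAPaper

namespace LDAPaper

theorem finite_ndm_iff_finite_qndm_sat (Agt : Type) [Fintype Agt] (φ : Frm Agt)
    (hφ : φ.isL) :
    (∃ M : PreNDM Agt, isNDM M ∧ finiteModel M ∧ ∃ w : M.W, M.sat w φ) ↔
      (∃ M : PreNDM Agt, isQNDM M ∧ finiteModel M ∧ ∃ w : M.W, M.sat w φ) := by
  constructor
  · rintro ⟨M, ⟨h1, h2, h3⟩, hfin, w, hw⟩
    refine ⟨M, ⟨h1, ?_, h3⟩, hfin, w, hw⟩
    intro i w' v hv α hα
    rw [h2 i w'] at hv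
    exact hv α hα
  · rintro ⟨M, ⟨hL0, hC1, hC2⟩, ⟨hWfin, hDfin, hVfin⟩, w0, hw0⟩
    classical
    have : Finite M.W := hWfin
    -- the finitely many atoms used in `φ` or in the belief bases
    set used : Set ℕ :=
      φ.atomsOf ∪ ⋃ i : Agt, ⋃ w : M.W, ⋃ α ∈ M.D i w, α.atomsOf with husedeq
    have husedfin : used.Finite := by
      refine (atomsOf_finite φ).union ?_
      refine Set.finite_iUnion fun i => Set.finite_iUnion fun w => ?_
      exact Set.Finite.biUnion (hDfin i w) fun α _ => atomsOf_finite α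
    have hDused : ∀ i w, ∀ α ∈ M.D i w, α.atomsOf ⊆ used := by
      intro i w α hα p hp
      exact Or.inr (Set.mem_iUnion.2 ⟨i, Set.mem_iUnion.2 ⟨w, Set.mem_biUnion hα hp⟩⟩)
    have hφused : φ.atomsOf ⊆ used := Set.subset_union_left
    -- fresh atoms, one per world
    obtain ⟨n, ⟨e⟩⟩ := Finite.exists_equiv_fin M.W
    obtain ⟨B, hB⟩ : ∃ B, ∀ p ∈ used, p < B := by
      obtain ⟨B, hB⟩ := husedfin.bddAbove
      exact ⟨B + 1, fun p hp => Nat.lt_succ_of_le (hB hp)⟩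
    set f : M.W → ℕ := fun v => B + (e v : ℕ) with hfeq
    have hfinj : Function.Injective f := by
      intro a b h
      have h2 : (e a : ℕ) = (e b : ℕ) := Nat.add_left_cancel h
      exact e.injective (Fin.val_injective h2)
    have hffresh : ∀ v, f v ∉ used := by
      intro v hv
      have h1 := hB _ hv
      have h2 : f v = B + (e v : ℕ) := rfl
      omega
    have hNfin : ∀ (i : Agt) (w : M.W), (M.N i w).Finite := fun i w => Set.toFinite _
    -- characteristic formulas of the notional sets
    set δ : Agt → M.W → Frm Agt := fun i w =>
      listOr (((hNfin i w).toFinset.toList).map (fun v => Frm.atom (f v))) with hδeq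
    set Vnew : ℕ → Set M.W := fun p => {v | f v = p} with hVneweq
    have hmemlist : ∀ (i : Agt) (w v : M.W),
        (Frm.atom (f v) : Frm Agt) ∈ ((hNfin i w).toFinset.toList).map (fun u => (Frm.atom (f u) : Frm Agt))
          ↔ v ∈ M.N i w := by
      intro i w v
      constructor
      · intro h
        obtain ⟨u, hu, he⟩ := List.mem_map.1 h
        have h2 : u = v := hfinj (Frm.atom.inj he)
        subst h2
        exact (hNfin i w).mem_toFinset.1 (Finset.mem_toList.1 hu)
      · intro h
        exact List.mem_map.2 ⟨v, Finset.mem_toList.2 ((hNfin i w).mem_toFinset.2 h), rfl⟩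
    have hδfresh : ∀ (i : Agt) (w : M.W), ∃ p ∈ (δ i w).atomsOf, p ∉ used := by
      intro i w
      obtain ⟨v, hv⟩ := hC2 i w
      refine ⟨f v, ?_, hffresh v⟩
      exact atomsOf_subset_listOr ((hmemlist i w v).2 hv) rfl
    have hsatatom : ∀ (u v : M.W),
        (tweak M used δ Vnew).sat v (Frm.atom (f u)) ↔ v = u := by
      intro u v
      simp only [PreNDM.sat, tweak]
      rw [if_neg (hffresh u)]
      exact ⟨fun h => hfinj h, fun h => by subst h; rfl⟩
    have hsatδ : ∀ (i : Agt) (w v : M.W),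
        (tweak M used δ Vnew).sat v (δ i w) ↔ v ∈ M.N i w := by
      intro i w v
      rw [hδeq]
      rw [sat_listOr (tweak M used δ Vnew) v]
      constructor
      · intro h
        obtain ⟨a, ha, hsa⟩ := h
        obtain ⟨u, hu, rfl⟩ := List.mem_map.1 ha
        have h2 : v = u := (hsatatom u v).1 hsa
        subst h2
        exact (hNfin i w).mem_toFinset.1 (Finset.mem_toList.1 hu)
      · intro h
        exact ⟨Frm.atom (f v), (hmemlist i w v).2 h, (hsatatom v v).2 rfl⟩
    refine ⟨tweak M used δ Vnew, ⟨?_, ?_, ?_⟩, ⟨?_, ?_, ?_⟩, w0, ?_⟩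
    · -- belief bases are L0
      intro i w α hα
      rcases Set.mem_insert_iff.1 hα with rfl | hα
      · rw [hδeq]
        refine isL0_listOr _ ?_
        rintro a ha
        obtain ⟨u, _, rfl⟩ := List.mem_map.1 ha
        trivial
      · exact hL0 i w α hα
    · -- (C1)
      intro i w
      ext v
      simp only [Set.mem_setOf_eq]
      constructor
      · intro hv α hα
        rcases Set.mem_insert_iff.1 hα with rfl | hα
        · exact (hsatδ i w v).2 hv
        · exact (sat_tweak M used δ Vnew hδfresh α (hDused i w α hα) v).2 (hC1 i w v hv α hα)
      · intro h
        exact (hsatδ i w v).1 (h (δ i w) (Set.mem_insert _ _))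
    · -- (C2)
      intro i w
      exact hC2 i w
    · exact hWfin
    · intro i w
      exact ((hDfin i w).insert _)
    · intro w
      refine Set.Finite.subset ((hVfin w).union (Set.finite_singleton (f w))) ?_
      intro p hp
      by_cases hpu : p ∈ used
      · left
        simp only [tweak, Set.mem_setOf_eq] at hp
        rw [if_pos hpu] at hp
        exact hp
      · right
        simp only [tweak, Set.mem_setOf_eq] at hp
        rw [if_neg hpu] at hp
        exact hp.symm ▸ rfl
    · exact (sat_tweak M used δ Vnew hδfresh φ hφused w0).2 hw0

end LDAPaper
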